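/- arXiv:2303.08988 — 2 statements merged into one kernel-verified Lean document; each statement's English description precedes it below -/
import Mathlib

section
/- There exist constants ε₀ ∈ (0,1) and C > 0 such that the following holds: for every directed graph G = ([s], E) in which every vertex has its in-degree equal to its out-degree (d_i⁺ = d_i⁻ for all i), with α = d_min⁺/s > 1/2 and ε = (d_max⁺ − d_min⁺)/d_min⁺ ≤ ε₀, the greatest two singular values σ₁ ≥ σ₂ of the equal-neighbor adjacency matrix A of G satisfy σ₁² ≤ 1 + ε + Cε² and σ₂² ≤ (1/α − 1)² + 2ε(1 + 2/α − 1/α²) + Cε². -/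
open Finset Matrix

/-- The out-degree of vertex `j`: the number of `i` with an edge from `j` to `i`. -/
def outDeg {n : ℕ} (E : Fin n → Fin n → Bool) (j : Fin n) : ℕ :=
  (Finset.univ.filter fun i => E j i = true).card

/-- The in-degree of vertex `j`: the number of `i` with an edge from `i` to `j`. -/
def inDeg {n : ℕ} (E : Fin n → Fin n → Bool) (j : Fin n) : ℕ :=
  (Finset.univ.filter fun i => E i j = true).card

/-- Minimum out-degree. -/
noncomputable def dminOut {n : ℕ} (E : Fin n → Fin n → Bool) : ℕ := sInf (Set.range (outDeg E))

/-- Maximum out-degree. -/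
noncomputable def dmaxOut {n : ℕ} (E : Fin n → Fin n → Bool) : ℕ := sSup (Set.range (outDeg E))

/-- Maximum in-degree. -/
noncomputable def dmaxIn {n : ℕ} (E : Fin n → Fin n → Bool) : ℕ := sSup (Set.range (inDeg E))

/-- The equal-neighbor adjacency matrix: `A i j = 1 / d_j⁺` if there is an edge from `j`
to `i`, and `0` otherwise. -/
noncomputable def eqNbrMatrix {n : ℕ} (E : Fin n → Fin n → Bool) :
    Matrix (Fin n) (Fin n) ℝ :=
  fun i j => if E j i = true then (outDeg E j : ℝ)⁻¹ else 0

/-- The `k`-th largest value (counted with multiplicity, `k = 0` being the largest) of a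
real-valued function on a finite index type; junk value `0` if `k ≥ card ι`. -/
noncomputable def kthLargest {ι : Type*} [Fintype ι] (f : ι → ℝ) (k : ℕ) : ℝ :=
  if k < Fintype.card ι then
    ((Finset.univ.val.map f).sort (· ≤ ·)).getD (Fintype.card ι - 1 - k) 0
  else 0

/-- The `k`-th largest singular value of a real square matrix (`k = 0` is the largest),
i.e. the `k`-th largest square root of an eigenvalue of `AᴴA`. -/
noncomputable def sval {ι : Type*} [Fintype ι] [DecidableEq ι] (A : Matrix ι ι ℝ) (k : ℕ) : ℝ :=
  kthLargest (fun i => Real.sqrt ((Matrix.isHermitian_conjTranspose_mul_self A).eigenvalues i)) k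

/-! ### Auxiliary lemmas -/

lemma kthLargest_zero_mem {ι : Type*} [Fintype ι] (f : ι → ℝ) (h : 0 < Fintype.card ι) :
    ∃ i, kthLargest f 0 = f i := by
  set n := Fintype.card ι with hn
  set l := ((Finset.univ.val.map f).sort (· ≤ ·)) with hl
  have hlen : l.length = n := by
    simp [hl, Multiset.length_sort, hn]
  have hlt : n - 1 - 0 < l.length := by omega
  have : kthLargest f 0 = l[n-1-0] := by
    rw [kthLargest, if_pos h, List.getD_eq_getElem l 0 hlt]
  have hmem : l[n-1-0] ∈ l := List.getElem_mem _
  rw [← Multiset.mem_coe, Multiset.sort_eq, Multiset.mem_map] at hmem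
  obtain ⟨i, _, hi⟩ := hmem
  exact ⟨i, by rw [this, hi]⟩

lemma kthLargest_exists_pair {ι : Type*} [Fintype ι] [DecidableEq ι] (f : ι → ℝ)
    (h2 : 2 ≤ Fintype.card ι) :
    ∃ i₀ i₁ : ι, i₀ ≠ i₁ ∧ kthLargest f 1 = f i₁ ∧ f i₁ ≤ f i₀ := by
  set n := Fintype.card ι with hn
  set l := ((Finset.univ.val.map f).sort (· ≤ ·)) with hl
  have hlen : l.length = n := by simp [hl, Multiset.length_sort, hn]
  have h1 : n - 2 < l.length := by omega
  have h2' : n - 1 < l.length := by omega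
  set a := l[n-1] with ha
  set b := l[n-2] with hb
  have hk1 : kthLargest f 1 = b := by
    rw [kthLargest, if_pos (by omega : 1 < n)]
    have : n - 1 - 1 = n - 2 := by omega
    rw [this, List.getD_eq_getElem l 0 h1]
  have hsort : l.Pairwise (· ≤ ·) := Multiset.pairwise_sort _ _
  have hba : b ≤ a := by
    have := hsort.rel_get_of_le (a := ⟨n-2, h1⟩) (b := ⟨n-1, h2'⟩)
      (by simp [Fin.le_def]; omega)
    simpa [List.get_eq_getElem] using this
  have hcoe : (l : Multiset ℝ) = Finset.univ.val.map f := by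
    rw [hl, Multiset.sort_eq]
  by_cases hab : b = a
  · have hdrop : l.drop (n-2) = [b, a] := by
      rw [List.drop_eq_getElem_cons h1]
      have e1 : n - 2 + 1 = n - 1 := by omega
      rw [e1, List.drop_eq_getElem_cons h2']
      have e2 : n - 1 + 1 = n := by omega
      rw [e2, List.drop_eq_nil_of_le (by omega)]
    have hcount2 : 2 ≤ l.count a := by
      have hsub : (l.drop (n-2)).Sublist l := List.drop_sublist _ _
      have := hsub.count_le a
      rw [hdrop] at this
      simp [List.count_cons, hab] at this
      omega
    have hcountm : 2 ≤ Multiset.count a (Finset.univ.val.map f) := by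
      rwa [← hcoe, Multiset.coe_count]
    rw [Multiset.count_map] at hcountm
    have hfil : Multiset.card (Multiset.filter (fun x => a = f x) Finset.univ.val)
        = (Finset.univ.filter (fun x => a = f x)).card := by
      rw [Finset.card_def, Finset.filter_val]
    rw [hfil] at hcountm
    have hc1 : 1 < (Finset.univ.filter (fun x => a = f x)).card := by omega
    obtain ⟨i₀, hi₀, i₁, hi₁, hne⟩ := Finset.one_lt_card.mp hc1
    simp only [Finset.mem_filter] at hi₀ hi₁
    exact ⟨i₀, i₁, hne, by rw [hk1, hab, hi₁.2], by rw [← hi₀.2, ← hi₁.2]⟩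
  · have hmema : a ∈ l := List.getElem_mem _
    have hmemb : b ∈ l := List.getElem_mem _
    rw [← Multiset.mem_coe, hcoe, Multiset.mem_map] at hmema hmemb
    obtain ⟨i₀, _, hi₀⟩ := hmema
    obtain ⟨i₁, _, hi₁⟩ := hmemb
    refine ⟨i₀, i₁, ?_, by rw [hk1, hi₁], by rw [hi₀, hi₁]; exact hba⟩
    rintro rfl
    exact hab (hi₁ ▸ hi₀)

lemma alg_aux (S M e : ℝ) (hP : 0 ≤ S*(2*M-S)) (he : 0 ≤ e) :
    S*(2*M-S)*(1-2*e) * (M*(1+e))^2 ≤ S*(2*M-S) * M^2 := by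
  nlinarith [mul_nonneg (mul_nonneg hP (sq_nonneg M))
    (show (0:ℝ) ≤ 3*e^2+2*e^3 by positivity)]

lemma alg_aux2 (S M e : ℝ) (hM : M ≠ 0) :
    (S/M - 1)^2 + 2*e*(1 + 2*(S/M) - (S/M)^2) + e^2
      - (1 + e - S*(2*M-S)*(1-2*e)/M^2) = e + e^2 := by
  field_simp
  ring

lemma quadform_le {s : ℕ} (M : Matrix (Fin s) (Fin s) ℝ)
    (hsym : ∀ j k, M j k = M k j) (hnn : ∀ j k, 0 ≤ M j k) (c : ℝ)
    (hrow : ∀ j, ∑ k, M j k ≤ c) (x : Fin s → ℝ) :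
    ∑ j, ∑ k, x j * M j k * x k ≤ c * ∑ j, x j ^ 2 := by
  have step1 : ∑ j, ∑ k, x j * M j k * x k ≤ ∑ j, ∑ k, M j k * (x j ^ 2 + x k ^ 2) / 2 := by
    refine Finset.sum_le_sum fun j _ => Finset.sum_le_sum fun k _ => ?_
    nlinarith [hnn j k, sq_nonneg (x j - x k), sq_nonneg (x j + x k)]
  have step2 : ∑ j, ∑ k, M j k * (x j ^ 2 + x k ^ 2) / 2
      = ∑ j, (∑ k, M j k) * x j ^ 2 := by
    have lhs_split : ∑ j, ∑ k, M j k * (x j ^ 2 + x k ^ 2) / 2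
        = (∑ j, ∑ k, M j k * x j ^ 2 / 2) + ∑ j, ∑ k, M j k * x k ^ 2 / 2 := by
      rw [← Finset.sum_add_distrib]
      refine Finset.sum_congr rfl fun j _ => ?_
      rw [← Finset.sum_add_distrib]
      exact Finset.sum_congr rfl fun k _ => by ring
    rw [lhs_split, Finset.sum_comm (f := fun j k => M j k * x k ^ 2 / 2)]
    have t1 : ∀ j : Fin s, ∑ k, M j k * x j ^ 2 / 2 = (∑ k, M j k) * x j ^ 2 / 2 := fun j => by
      rw [Finset.sum_mul, Finset.sum_div]
    have t2 : ∀ k : Fin s, ∑ j, M j k * x k ^ 2 / 2 = (∑ j, M k j) * x k ^ 2 / 2 := fun k => by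
      rw [Finset.sum_mul, Finset.sum_div]
      exact Finset.sum_congr rfl fun j _ => by rw [hsym j k]
    calc (∑ j, ∑ k, M j k * x j ^ 2 / 2) + ∑ k, ∑ j, M j k * x k ^ 2 / 2
        = (∑ j, (∑ k, M j k) * x j ^ 2 / 2) + ∑ k, (∑ j, M k j) * x k ^ 2 / 2 := by
          rw [Finset.sum_congr rfl fun j _ => t1 j, Finset.sum_congr rfl fun k _ => t2 k]
      _ = ∑ j, (∑ k, M j k) * x j ^ 2 := by
          rw [← Finset.sum_add_distrib]
          exact Finset.sum_congr rfl fun j _ => by ring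
  have step3 : ∑ j, (∑ k, M j k) * x j ^ 2 ≤ ∑ j, c * x j ^ 2 :=
    Finset.sum_le_sum fun j _ => mul_le_mul_of_nonneg_right (hrow j) (sq_nonneg _)
  rw [Finset.mul_sum]
  calc ∑ j, ∑ k, x j * M j k * x k ≤ _ := step1
    _ = _ := step2
    _ ≤ _ := step3

section spectral
variable {s : ℕ} {M : Matrix (Fin s) (Fin s) ℝ} (hM : M.IsHermitian)

lemma eigen_norm_one (i : Fin s) :
    ∑ j, (hM.eigenvectorBasis i : EuclideanSpace ℝ (Fin s)) j ^ 2 = 1 := by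
  have h := hM.eigenvectorBasis.orthonormal.1 i
  have h2 : (inner ℝ (hM.eigenvectorBasis i) (hM.eigenvectorBasis i) : ℝ) = 1 := by
    rw [real_inner_self_eq_norm_sq, h]; norm_num
  rw [PiLp.inner_apply] at h2
  simp only [RCLike.inner_apply, starRingEnd_apply, star_trivial] at h2
  rw [← h2]
  exact Finset.sum_congr rfl fun j _ => by ring

lemma eigen_orth {i j : Fin s} (hij : i ≠ j) :
    ∑ x, (hM.eigenvectorBasis i : EuclideanSpace ℝ (Fin s)) x
      * (hM.eigenvectorBasis j : EuclideanSpace ℝ (Fin s)) x = 0 := by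
  have h : (inner ℝ (hM.eigenvectorBasis i) (hM.eigenvectorBasis j) : ℝ) = 0 :=
    hM.eigenvectorBasis.orthonormal.2 hij
  rw [PiLp.inner_apply] at h
  simp only [RCLike.inner_apply, starRingEnd_apply, star_trivial] at h
  rw [← h]; exact Finset.sum_congr rfl fun x _ => by ring

lemma eigen_rayleigh (i : Fin s) :
    hM.eigenvalues i = ∑ j, ∑ k,
      (hM.eigenvectorBasis i : EuclideanSpace ℝ (Fin s)) j * M j k
        * (hM.eigenvectorBasis i : EuclideanSpace ℝ (Fin s)) k := by
  rw [hM.eigenvalues_eq]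
  simp only [dotProduct, Pi.star_apply, star_trivial, RCLike.re_to_real, mulVec,
    Finset.mul_sum]
  exact Finset.sum_congr rfl fun j _ => Finset.sum_congr rfl fun k _ => by
    ring

lemma min_eigen_le (c : ℝ)
    (H : ∀ x : Fin s → ℝ, (∑ j, x j = 0) →
      ∑ j, ∑ k, x j * M j k * x k ≤ c * ∑ j, x j ^ 2)
    {i j : Fin s} (hij : i ≠ j) :
    min (hM.eigenvalues i) (hM.eigenvalues j) ≤ c := by
  set v : Fin s → ℝ := ⇑(hM.eigenvectorBasis i : EuclideanSpace ℝ (Fin s)) with hv'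
  set u : Fin s → ℝ := ⇑(hM.eigenvectorBasis j : EuclideanSpace ℝ (Fin s)) with hu'
  have hv : ∑ x, v x ^ 2 = 1 := eigen_norm_one hM i
  have hu : ∑ x, u x ^ 2 = 1 := eigen_norm_one hM j
  have hvu : ∑ x, v x * u x = 0 := eigen_orth hM hij
  have hMv : M *ᵥ v = hM.eigenvalues i • v := hM.mulVec_eigenvectorBasis i
  have hMu : M *ᵥ u = hM.eigenvalues j • u := hM.mulVec_eigenvectorBasis j
  have quad : ∀ p q : ℝ,
      ∑ x, ∑ k, (p * v x + q * u x) * M x k * (p * v k + q * u k)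
        = p^2 * hM.eigenvalues i + q^2 * hM.eigenvalues j := by
    intro p q
    have hw : M *ᵥ (fun t => p * v t + q * u t)
        = fun t => p * hM.eigenvalues i * v t + q * hM.eigenvalues j * u t := by
      have hfun : (fun t => p * v t + q * u t) = p • v + q • u := by
        funext t; simp [Pi.smul_apply]
      rw [hfun, mulVec_add, mulVec_smul, mulVec_smul, hMv, hMu]
      funext t; simp [Pi.smul_apply]; ring
    have e1 : ∀ x, ∑ k, (p * v x + q * u x) * M x k * (p * v k + q * u k)
        = (p * v x + q * u x) * (M *ᵥ (fun t => p * v t + q * u t)) x := by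
      intro x
      simp only [mulVec, dotProduct, Finset.mul_sum]
      exact Finset.sum_congr rfl fun k _ => by ring
    rw [Finset.sum_congr rfl fun x _ => e1 x]
    simp only [hw]
    have e2 : ∑ x, (p * v x + q * u x)
          * (p * hM.eigenvalues i * v x + q * hM.eigenvalues j * u x)
        = p * p * hM.eigenvalues i * (∑ x, v x ^ 2)
          + (p * q * hM.eigenvalues j + p * q * hM.eigenvalues i) * (∑ x, v x * u x)
          + q * q * hM.eigenvalues j * (∑ x, u x ^ 2) := by
      simp only [Finset.mul_sum, ← Finset.sum_add_distrib]
      exact Finset.sum_congr rfl fun x _ => by ring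
    rw [e2, hv, hu, hvu]; ring
  set a := ∑ x, v x with ha'
  set b := ∑ x, u x with hb'
  by_cases hab : a = 0 ∧ b = 0
  · have hsum : ∑ x, (1 * v x + 0 * u x) = 0 := by
      simp only [one_mul, zero_mul, add_zero]; exact hab.1
    have hQ := H _ hsum
    rw [quad 1 0] at hQ
    have hnorm : ∑ x, (1 * v x + 0 * u x) ^ 2 = 1 := by
      simp only [one_mul, zero_mul, add_zero]; exact hv
    rw [hnorm] at hQ
    calc min (hM.eigenvalues i) (hM.eigenvalues j) ≤ hM.eigenvalues i := min_le_left _ _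
      _ ≤ c := by linarith
  · have hsum : ∑ x, (b * v x + (-a) * u x) = 0 := by
      simp only [Finset.sum_add_distrib, ← Finset.mul_sum, ← ha', ← hb']
      ring
    have hQ := H _ hsum
    rw [quad b (-a)] at hQ
    have hnorm : ∑ x, (b * v x + (-a) * u x) ^ 2
        = b^2 * (∑ x, v x ^ 2) + (2 * b * (-a)) * (∑ x, v x * u x) + a^2 * (∑ x, u x ^ 2) := by
      simp only [Finset.mul_sum, ← Finset.sum_add_distrib]
      exact Finset.sum_congr rfl fun x _ => by ring
    rw [hnorm, hv, hu, hvu] at hQ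
    have habpos : 0 < a^2 + b^2 := by
      rcases not_and_or.mp hab with h | h
      · nlinarith [mul_self_pos.mpr h, sq_nonneg b]
      · nlinarith [mul_self_pos.mpr h, sq_nonneg a]
    rcases le_total (hM.eigenvalues i) (hM.eigenvalues j) with h | h
    · rw [min_eq_left h]; nlinarith [sq_nonneg a, sq_nonneg b]
    · rw [min_eq_right h]; nlinarith [sq_nonneg a, sq_nonneg b]
end spectral

set_option maxHeartbeats 1600000 in
/-- There exist `ε₀ ∈ (0,1)` and `C > 0` such that for every digraph in which every vertex
has its in-degree equal to its out-degree, with `α = d_min⁺/s > 1/2` and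
`ε = (d_max⁺ − d_min⁺)/d_min⁺ ≤ ε₀`, the two largest singular values of the equal-neighbor
adjacency matrix satisfy `σ₁² ≤ 1 + ε + Cε²` and
`σ₂² ≤ (1/α − 1)² + 2ε(1 + 2/α − 1/α²) + Cε²`. -/
theorem stmt6 :
    ∃ ε₀ ∈ Set.Ioo (0 : ℝ) 1, ∃ C : ℝ, 0 < C ∧
      ∀ (s : ℕ), 0 < s → ∀ (E : Fin s → Fin s → Bool),
        (∀ j : Fin s, 0 < outDeg E j) →
        (∀ i : Fin s, inDeg E i = outDeg E i) →
        ∀ (α ε : ℝ),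
          α = (dminOut E : ℝ) / s →
          ε = ((dmaxOut E : ℝ) - (dminOut E : ℝ)) / (dminOut E : ℝ) →
          1 / 2 < α → ε ≤ ε₀ →
          sval (eqNbrMatrix E) 0 ^ 2 ≤ 1 + ε + C * ε ^ 2 ∧
          sval (eqNbrMatrix E) 1 ^ 2 ≤
            (1 / α - 1) ^ 2 + 2 * ε * (1 + 2 / α - 1 / α ^ 2) + C * ε ^ 2 := by
  refine ⟨1/2, ⟨by norm_num, by norm_num⟩, 1, one_pos, ?_⟩
  intro s hs E hdeg hio α ε hα hε hα2 hεb
  classical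
  -- degree facts
  have houtle : ∀ j, outDeg E j ≤ s := fun j => by
    simpa [outDeg] using (Finset.card_filter_le Finset.univ (fun i => E j i = true))
  have hmin_le : ∀ j, dminOut E ≤ outDeg E j := fun j => Nat.sInf_le ⟨j, rfl⟩
  have hbdd : BddAbove (Set.range (outDeg E)) := (Set.finite_range _).bddAbove
  have hmax_ge : ∀ j, outDeg E j ≤ dmaxOut E := fun j => le_csSup hbdd ⟨j, rfl⟩
  have hne0 : (Set.range (outDeg E)).Nonempty := ⟨_, ⟨⟨0, hs⟩, rfl⟩⟩
  obtain ⟨j₀, hj₀⟩ := Nat.sSup_mem hne0 hbdd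
  have hmax_le_s : dmaxOut E ≤ s := by rw [dmaxOut, ← hj₀]; exact houtle j₀
  have hmin_le_max : dminOut E ≤ dmaxOut E := le_trans (hmin_le j₀) (le_of_eq hj₀)
  set m : ℝ := (dminOut E : ℝ) with hm
  set d : ℝ := (dmaxOut E : ℝ) with hd
  have hsR : (0:ℝ) < s := by exact_mod_cast hs
  have hm_half : (s:ℝ) / 2 < m := by
    rw [hα, div_lt_div_iff₀ (by norm_num) hsR] at hα2
    linarith
  have hm_pos : (0:ℝ) < m := lt_of_le_of_lt (by positivity) hm_half
  have hmd : m ≤ d := by rw [hm, hd]; exact_mod_cast hmin_le_max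
  have hds : d ≤ (s:ℝ) := by rw [hd]; exact_mod_cast hmax_le_s
  have hms : m ≤ (s:ℝ) := le_trans hmd hds
  have hd_pos : (0:ℝ) < d := lt_of_lt_of_le hm_pos hmd
  have hε0 : 0 ≤ ε := by rw [hε]; apply div_nonneg (by linarith) (le_of_lt hm_pos)
  have hdm : d = m * (1 + ε) := by
    rw [hε]; field_simp; ring
  have houtpos : ∀ j, (0:ℝ) < (outDeg E j : ℝ) := fun j => by exact_mod_cast hdeg j
  have hm_le' : ∀ j, m ≤ (outDeg E j : ℝ) := fun j => by
    rw [hm]; exact_mod_cast hmin_le j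
  have hd_ge' : ∀ j, (outDeg E j : ℝ) ≤ d := fun j => by
    rw [hd]; exact_mod_cast hmax_ge j
  -- matrix entry facts
  have hA0 : ∀ i j, 0 ≤ eqNbrMatrix E i j := by
    intro i j; simp only [eqNbrMatrix]; split
    · positivity
    · exact le_refl 0
  have hAlow : ∀ i j, E j i = true → d⁻¹ ≤ eqNbrMatrix E i j := by
    intro i j h; simp only [eqNbrMatrix, if_pos h]
    exact inv_anti₀ (houtpos j) (hd_ge' j)
  have hcol : ∀ j, ∑ i, eqNbrMatrix E i j = 1 := by
    intro j
    have e : ∑ i, eqNbrMatrix E i j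
        = ∑ i ∈ Finset.univ.filter (fun i => E j i = true), ((outDeg E j : ℝ))⁻¹ := by
      rw [Finset.sum_filter]
      exact Finset.sum_congr rfl fun i _ => by simp only [eqNbrMatrix]
    have hcard : (Finset.univ.filter (fun i => E j i = true)).card = outDeg E j := rfl
    rw [e, Finset.sum_const, hcard, nsmul_eq_mul]
    exact mul_inv_cancel₀ (ne_of_gt (houtpos j))
  have hrow : ∀ i, ∑ j, eqNbrMatrix E i j ≤ 1 + ε := by
    intro i
    have h1 : ∑ j, eqNbrMatrix E i j ≤ ∑ j, (if E j i = true then m⁻¹ else 0) := by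
      refine Finset.sum_le_sum fun j _ => ?_
      simp only [eqNbrMatrix]
      split
      · exact inv_anti₀ hm_pos (hm_le' j)
      · exact le_refl 0
    have h2 : ∑ j, (if E j i = true then m⁻¹ else (0:ℝ)) = (inDeg E i : ℝ) * m⁻¹ := by
      rw [← Finset.sum_filter]
      have hcard : (Finset.univ.filter (fun j => E j i = true)).card = inDeg E i := rfl
      rw [Finset.sum_const, hcard, nsmul_eq_mul]
    have h3 : (inDeg E i : ℝ) * m⁻¹ ≤ d * m⁻¹ := by
      apply mul_le_mul_of_nonneg_right _ (inv_nonneg.mpr (le_of_lt hm_pos))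
      rw [hio i]; exact hd_ge' i
    have h4 : d * m⁻¹ = 1 + ε := by rw [hdm]; field_simp
    rw [h2] at h1
    linarith
  -- the Gram matrix
  have hM := Matrix.isHermitian_conjTranspose_mul_self (eqNbrMatrix E)
  have hMentry : ∀ j k, ((eqNbrMatrix E)ᴴ * eqNbrMatrix E) j k
      = ∑ i, eqNbrMatrix E i j * eqNbrMatrix E i k := by
    intro j k
    rw [Matrix.mul_apply]
    exact Finset.sum_congr rfl fun i _ => by rw [conjTranspose_apply, star_trivial]
  have hMsym : ∀ j k, ((eqNbrMatrix E)ᴴ * eqNbrMatrix E) j k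
      = ((eqNbrMatrix E)ᴴ * eqNbrMatrix E) k j := by
    intro j k; rw [hMentry, hMentry]; exact Finset.sum_congr rfl fun i _ => by ring
  have hMnn : ∀ j k, 0 ≤ ((eqNbrMatrix E)ᴴ * eqNbrMatrix E) j k := by
    intro j k; rw [hMentry]
    exact Finset.sum_nonneg fun i _ => mul_nonneg (hA0 i j) (hA0 i k)
  have hMrow : ∀ j, ∑ k, ((eqNbrMatrix E)ᴴ * eqNbrMatrix E) j k ≤ 1 + ε := by
    intro j
    have e : ∑ k, ((eqNbrMatrix E)ᴴ * eqNbrMatrix E) j k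
        = ∑ i, eqNbrMatrix E i j * (∑ k, eqNbrMatrix E i k) := by
      rw [Finset.sum_congr rfl fun k _ => hMentry j k, Finset.sum_comm]
      exact Finset.sum_congr rfl fun i _ => by rw [Finset.mul_sum]
    rw [e]
    calc ∑ i, eqNbrMatrix E i j * (∑ k, eqNbrMatrix E i k)
        ≤ ∑ i, eqNbrMatrix E i j * (1 + ε) := Finset.sum_le_sum fun i _ =>
          mul_le_mul_of_nonneg_left (hrow i) (hA0 i j)
      _ = (1 + ε) * ∑ i, eqNbrMatrix E i j := by rw [← Finset.sum_mul]; ring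
      _ = 1 + ε := by rw [hcol j, mul_one]
  have hMlow : ∀ j k, (2*m - s)/d^2 ≤ ((eqNbrMatrix E)ᴴ * eqNbrMatrix E) j k := by
    intro j k
    set T := Finset.univ.filter (fun i => E j i = true ∧ E k i = true) with hT
    have hTcard : outDeg E j + outDeg E k ≤ T.card + s := by
      have h1 : T = (Finset.univ.filter (fun i => E j i = true))
          ∩ (Finset.univ.filter (fun i => E k i = true)) := by
        rw [hT, Finset.filter_and]
      have h2 := Finset.card_inter_add_card_union
        (Finset.univ.filter (fun i => E j i = true))
        (Finset.univ.filter (fun i => E k i = true))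
      have h3 : ((Finset.univ.filter (fun i => E j i = true))
          ∪ (Finset.univ.filter (fun i => E k i = true))).card ≤ s := by
        refine le_trans (Finset.card_le_card (Finset.subset_univ _)) ?_
        simp
      have h4 : outDeg E j = (Finset.univ.filter (fun i => E j i = true)).card := rfl
      have h5 : outDeg E k = (Finset.univ.filter (fun i => E k i = true)).card := rfl
      rw [h4, h5, h1]
      omega
    have hTr : (2*m - (s:ℝ)) ≤ (T.card : ℝ) := by
      have hc : (outDeg E j : ℝ) + (outDeg E k : ℝ) ≤ (T.card : ℝ) + s := by
        exact_mod_cast hTcard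
      have := hm_le' j; have := hm_le' k
      linarith
    have hsum : ∑ _i ∈ T, d⁻¹ * d⁻¹ ≤ ∑ i, eqNbrMatrix E i j * eqNbrMatrix E i k := by
      refine le_trans (Finset.sum_le_sum fun i hi => ?_)
        (Finset.sum_le_sum_of_subset_of_nonneg (Finset.subset_univ T)
          fun i _ _ => mul_nonneg (hA0 i j) (hA0 i k))
      rw [hT, Finset.mem_filter] at hi
      exact mul_le_mul (hAlow i j hi.2.1) (hAlow i k hi.2.2)
        (inv_nonneg.mpr (le_of_lt hd_pos)) (hA0 i j)
    rw [hMentry]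
    have hinv : d⁻¹ * d⁻¹ = (d^2)⁻¹ := by rw [sq, mul_inv]
    calc (2*m - (s:ℝ))/d^2 ≤ (T.card : ℝ) * (d⁻¹ * d⁻¹) := by
          rw [hinv, div_eq_mul_inv]
          exact mul_le_mul_of_nonneg_right hTr (inv_nonneg.mpr (sq_nonneg d))
      _ = ∑ _i ∈ T, d⁻¹ * d⁻¹ := by rw [Finset.sum_const, nsmul_eq_mul]
      _ ≤ _ := hsum
  set m0 : ℝ := (2*m - s)/d^2 with hm0def
  set cN : ℝ := 1 + ε - s * m0 with hcNdef
  have hm0 : 0 ≤ m0 := by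
    rw [hm0def]; apply div_nonneg (by linarith) (sq_nonneg d)
  have hNrow : ∀ j, ∑ k, (((eqNbrMatrix E)ᴴ * eqNbrMatrix E) j k - m0) ≤ cN := by
    intro j
    rw [Finset.sum_sub_distrib, Finset.sum_const, Finset.card_univ, Fintype.card_fin,
      nsmul_eq_mul]
    have := hMrow j
    rw [hcNdef]; linarith
  have hQN := quadform_le (fun j k => ((eqNbrMatrix E)ᴴ * eqNbrMatrix E) j k - m0)
      (fun j k => by rw [hMsym j k])
      (fun j k => by have := hMlow j k; linarith)
      cN hNrow
  have hQM0 : ∀ x : Fin s → ℝ, (∑ j, x j = 0) →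
      ∑ j, ∑ k, x j * ((eqNbrMatrix E)ᴴ * eqNbrMatrix E) j k * x k ≤ cN * ∑ j, x j ^ 2 := by
    intro x hx
    have key : m0 * ((∑ j, x j) * (∑ j, x j)) = ∑ j, ∑ k, m0 * (x j * x k) := by
      rw [Finset.sum_mul_sum, Finset.mul_sum]
      exact Finset.sum_congr rfl fun j _ => by rw [Finset.mul_sum]
    have hdiff : ∑ j, ∑ k, x j * ((eqNbrMatrix E)ᴴ * eqNbrMatrix E) j k * x k
        = (∑ j, ∑ k, x j * (((eqNbrMatrix E)ᴴ * eqNbrMatrix E) j k - m0) * x k)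
          + m0 * ((∑ j, x j) * (∑ j, x j)) := by
      rw [key, ← Finset.sum_add_distrib]
      refine Finset.sum_congr rfl fun j _ => ?_
      rw [← Finset.sum_add_distrib]
      exact Finset.sum_congr rfl fun k _ => by ring
    rw [hdiff, hx]
    simpa using hQN x
  have hQM1 := quadform_le ((eqNbrMatrix E)ᴴ * eqNbrMatrix E) hMsym hMnn (1+ε) hMrow
  have hEnn : ∀ i, 0 ≤ hM.eigenvalues i := fun i =>
    Matrix.eigenvalues_conjTranspose_mul_self_nonneg (eqNbrMatrix E) i
  have hE1 : ∀ i, hM.eigenvalues i ≤ 1 + ε := by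
    intro i
    rw [eigen_rayleigh hM i]
    calc _ ≤ (1+ε) * ∑ j, (hM.eigenvectorBasis i : EuclideanSpace ℝ (Fin s)) j ^ 2 :=
        hQM1 _
      _ = 1 + ε := by rw [eigen_norm_one hM i, mul_one]
  have hE2 : ∀ i j : Fin s, i ≠ j → min (hM.eigenvalues i) (hM.eigenvalues j) ≤ cN :=
    fun i j hij => min_eigen_le hM cN hQM0 hij
  -- algebra
  have hcN0 : 0 ≤ cN := by
    rw [hcNdef, hm0def]
    have h1 : (s:ℝ) * (2*m - s) ≤ m^2 := by nlinarith [sq_nonneg ((s:ℝ) - m)]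
    have h2 : m^2 ≤ d^2 := by nlinarith
    have h3 : (s:ℝ) * ((2*m - s)/d^2) ≤ 1 := by
      rw [← mul_div_assoc, div_le_one (by positivity)]
      linarith
    linarith
  have halg : cN ≤ (1/α - 1)^2 + 2*ε*(1 + 2/α - 1/α^2) + 1*ε^2 := by
    have htgt : (1/α - 1)^2 + 2*ε*(1 + 2/α - 1/α^2) + 1*ε^2
        = ((s:ℝ)/m - 1)^2 + 2*ε*(1 + 2*((s:ℝ)/m) - ((s:ℝ)/m)^2) + ε^2 := by
      rw [hα]; field_simp
    rw [htgt, hcNdef, hm0def, hdm]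
    have h1ε : (0:ℝ) < 1 + ε := by linarith
    have h2ms : (0:ℝ) ≤ s * (2*m - s) := mul_nonneg (le_of_lt hsR) (by linarith)
    have hkey : (s:ℝ)*(2*m-s)*(1-2*ε) / m^2 ≤ s*((2*m-s)/(m*(1+ε))^2) := by
      rw [← mul_div_assoc, div_le_div_iff₀ (by positivity) (by positivity)]
      exact alg_aux s m ε h2ms hε0
    have hdq := alg_aux2 s m ε (ne_of_gt hm_pos)
    linarith [hkey, hdq, hε0, sq_nonneg ε]
  have hcard : Fintype.card (Fin s) = s := Fintype.card_fin s
  constructor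
  · obtain ⟨i0, hi0⟩ := kthLargest_zero_mem
      (fun i => Real.sqrt (hM.eigenvalues i)) (by rw [hcard]; exact hs)
    have hsv : sval (eqNbrMatrix E) 0 = Real.sqrt (hM.eigenvalues i0) := hi0
    rw [hsv, Real.sq_sqrt (hEnn i0)]
    have h := hE1 i0
    have hsq := sq_nonneg ε
    linarith
  · by_cases h2 : 2 ≤ s
    · obtain ⟨i0, i1, hne, hk1, hle⟩ := kthLargest_exists_pair
        (fun i => Real.sqrt (hM.eigenvalues i)) (by rw [hcard]; exact h2)
      have hsv : sval (eqNbrMatrix E) 1 = Real.sqrt (hM.eigenvalues i1) := hk1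
      have hlam : hM.eigenvalues i1 ≤ hM.eigenvalues i0 := by
        have h01 := Real.sq_sqrt (hEnn i0)
        have h11 := Real.sq_sqrt (hEnn i1)
        nlinarith [hle, Real.sqrt_nonneg (hM.eigenvalues i0),
          Real.sqrt_nonneg (hM.eigenvalues i1)]
      have hmin := hE2 i0 i1 hne
      rw [min_eq_right hlam] at hmin
      rw [hsv, Real.sq_sqrt (hEnn i1)]
      linarith
    · have hnot : ¬ (1 < Fintype.card (Fin s)) := by rw [hcard]; omega
      have hz : sval (eqNbrMatrix E) 1 = 0 := by
        rw [sval, kthLargest, if_neg hnot]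
      rw [hz]
      have h0 : (0:ℝ)^2 = 0 := by norm_num
      rw [h0]
      linarith
end

section
/- Let G = ([s], E) be a directed graph in which every vertex has positive out-degree and its in-degree equals its out-degree (d_i⁺ = d_i⁻ for all i). Then the largest singular value σ₁ of the equal-neighbor adjacency matrix A of G satisfies σ₁² ≤ d_max⁺/d_min⁺ = 1 + ε, where ε = (d_max⁺ − d_min⁺)/d_min⁺. -/
open Finset Matrix

lemma eig_le_row_sums {n : ℕ} (B : Matrix (Fin n) (Fin n) ℝ)
    (hB : B.IsHermitian) (R : ℝ)
    (hR : ∀ i, ∑ j, |B i j| ≤ R) (i : Fin n) :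
    hB.eigenvalues i ≤ R := by
  set v : Fin n → ℝ := ⇑(hB.eigenvectorBasis i) with hv
  have hmv : B *ᵥ v = hB.eigenvalues i • v := hB.mulVec_eigenvectorBasis i
  have hvne : ∃ k, v k ≠ 0 := by
    by_contra h
    push_neg at h
    apply hB.eigenvectorBasis.orthonormal.ne_zero i
    ext k
    exact h k
  obtain ⟨k0, hk0⟩ := hvne
  obtain ⟨i0, -, hmax⟩ := Finset.exists_max_image Finset.univ (fun k => |v k|)
    ⟨i, Finset.mem_univ i⟩
  have hpos : 0 < |v i0| := lt_of_lt_of_le (abs_pos.mpr hk0) (hmax k0 (Finset.mem_univ k0))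
  have heq : hB.eigenvalues i * v i0 = ∑ j, B i0 j * v j := by
    have := congrFun hmv i0
    simp only [Pi.smul_apply, smul_eq_mul] at this
    rw [← this]
    rfl
  have habs : |hB.eigenvalues i| * |v i0| ≤ R * |v i0| := by
    rw [← abs_mul, heq]
    calc |∑ j, B i0 j * v j| ≤ ∑ j, |B i0 j * v j| := Finset.abs_sum_le_sum_abs _ _
      _ = ∑ j, |B i0 j| * |v j| := by simp [abs_mul]
      _ ≤ ∑ j, |B i0 j| * |v i0| := by
          apply Finset.sum_le_sum
          intro j _
          exact mul_le_mul_of_nonneg_left (hmax j (Finset.mem_univ j)) (abs_nonneg _)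
      _ = (∑ j, |B i0 j|) * |v i0| := by rw [Finset.sum_mul]
      _ ≤ R * |v i0| := mul_le_mul_of_nonneg_right (hR i0) (abs_nonneg _)
  have := le_of_mul_le_mul_right habs hpos
  exact le_trans (le_abs_self _) this

/-- For a digraph in which every vertex has positive out-degree and in-degree equal to
out-degree, the largest singular value of the equal-neighbor adjacency matrix satisfies
`σ₁² ≤ d_max⁺/d_min⁺ = 1 + ε` where `ε = (d_max⁺ − d_min⁺)/d_min⁺`. -/
theorem stmt12 (s : ℕ) (hs : 0 < s) (E : Fin s → Fin s → Bool)
    (hdeg : ∀ j : Fin s, 0 < outDeg E j)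
    (hbal : ∀ i : Fin s, inDeg E i = outDeg E i)
    (ε : ℝ) (hε : ε = ((dmaxOut E : ℝ) - (dminOut E : ℝ)) / (dminOut E : ℝ)) :
    sval (eqNbrMatrix E) 0 ^ 2 ≤ (dmaxOut E : ℝ) / (dminOut E : ℝ) ∧
      (dmaxOut E : ℝ) / (dminOut E : ℝ) = 1 + ε := by
  set A := eqNbrMatrix E with hA
  set M := (dmaxOut E : ℝ) with hM
  set m := (dminOut E : ℝ) with hm'
  -- dmin positive
  have hne : (Set.range (outDeg E)).Nonempty := ⟨outDeg E ⟨0, hs⟩, ⟨⟨0, hs⟩, rfl⟩⟩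
  obtain ⟨j0, hj0⟩ := Nat.sInf_mem hne
  have hdmin : dminOut E = outDeg E j0 := hj0.symm
  have hmpos : 0 < m := by
    rw [hm', hdmin]
    exact_mod_cast hdeg j0
  -- basic degree facts
  have hdm : ∀ j, m ≤ (outDeg E j : ℝ) := fun j => by
    rw [hm']
    have h1 : dminOut E ≤ outDeg E j := Nat.sInf_le (Set.mem_range_self j)
    exact_mod_cast h1
  have hdM : ∀ j, (outDeg E j : ℝ) ≤ M := fun j => by
    rw [hM]
    have h1 : outDeg E j ≤ dmaxOut E :=
      le_csSup (Set.Finite.bddAbove (Set.finite_range _)) (Set.mem_range_self j)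
    exact_mod_cast h1
  -- entries of A are nonneg
  have hAnn : ∀ i j, 0 ≤ A i j := by
    intro i j
    rw [hA]
    unfold eqNbrMatrix
    split <;> positivity
  -- column sums of A are 1
  have hcol : ∀ i, ∑ k, A k i = 1 := by
    intro i
    have : ∑ k, A k i = ∑ k ∈ Finset.univ.filter (fun k => E i k = true),
        ((outDeg E i : ℝ))⁻¹ := by
      rw [Finset.sum_filter]
      rfl
    rw [this, Finset.sum_const]
    have hc : (Finset.univ.filter fun k => E i k = true).card = outDeg E i := rfl
    rw [hc, nsmul_eq_mul, mul_inv_cancel₀]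
    exact Nat.cast_ne_zero.mpr (hdeg i).ne'
  -- row sums of A are ≤ M/m
  have hrow : ∀ k, ∑ j, A k j ≤ M / m := by
    intro k
    have h1 : ∑ j, A k j = ∑ j ∈ Finset.univ.filter (fun j => E j k = true),
        ((outDeg E j : ℝ))⁻¹ := by
      rw [Finset.sum_filter]
      rfl
    rw [h1]
    calc ∑ j ∈ Finset.univ.filter (fun j => E j k = true), ((outDeg E j : ℝ))⁻¹
        ≤ ∑ j ∈ Finset.univ.filter (fun j => E j k = true), m⁻¹ := by
          apply Finset.sum_le_sum
          intro j _
          exact inv_anti₀ hmpos (hdm j)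
      _ = (inDeg E k : ℝ) * m⁻¹ := by
          rw [Finset.sum_const, nsmul_eq_mul]
          rfl
      _ = (outDeg E k : ℝ) * m⁻¹ := by rw [hbal k]
      _ ≤ M * m⁻¹ := by
          apply mul_le_mul_of_nonneg_right (hdM k)
          positivity
      _ = M / m := by rw [div_eq_mul_inv]
  -- row abs-sums of AᴴA bounded
  have hBrow : ∀ i, ∑ j, |(Aᴴ * A) i j| ≤ M / m := by
    intro i
    have hBij : ∀ i j, (Aᴴ * A) i j = ∑ k, A k i * A k j := by
      intro i j
      simp [Matrix.mul_apply, Matrix.conjTranspose_apply]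
    have hBnn : ∀ j, 0 ≤ (Aᴴ * A) i j := by
      intro j
      rw [hBij]
      exact Finset.sum_nonneg fun k _ => mul_nonneg (hAnn k i) (hAnn k j)
    calc ∑ j, |(Aᴴ * A) i j| = ∑ j, (Aᴴ * A) i j := by
          exact Finset.sum_congr rfl fun j _ => abs_of_nonneg (hBnn j)
      _ = ∑ k, A k i * ∑ j, A k j := by
          simp only [hBij]
          rw [Finset.sum_comm]
          exact Finset.sum_congr rfl fun k _ => by rw [Finset.mul_sum]
      _ ≤ ∑ k, A k i * (M / m) := by
          apply Finset.sum_le_sum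
          intro k _
          exact mul_le_mul_of_nonneg_left (hrow k) (hAnn k i)
      _ = (∑ k, A k i) * (M / m) := by rw [Finset.sum_mul]
      _ = M / m := by rw [hcol i, one_mul]
  constructor
  · obtain ⟨i, hi⟩ := kthLargest_zero_mem
      (fun i => Real.sqrt ((Matrix.isHermitian_conjTranspose_mul_self A).eigenvalues i))
      (by simpa using hs)
    have : sval A 0 = Real.sqrt ((Matrix.isHermitian_conjTranspose_mul_self A).eigenvalues i) := hi
    rw [this, Real.sq_sqrt (Matrix.eigenvalues_conjTranspose_mul_self_nonneg A i)]
    exact eig_le_row_sums _ _ _ hBrow i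
  · rw [hε]
    field_simp
    ring
end
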